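/- arXiv:1212.6334 — 2 statements merged into one kernel-verified Lean document; each statement's English description precedes it below -/
import Mathlib

section
/- Let I, J, Ω be dyadic intervals with |I| = |J| = 2|Ω|^{-1}. Then for almost all x₁, x₂, y₁, y₂: 4·Σ_{α,β∈{0,1}} Π_{i∈{1,2}} w_{I_α,0}(x_i) w_{J_β×Ω}(y_i) − Σ_{γ∈{0,1}} Π_{i∈{1,2}} w_{I,0}(x_i) w_{J×Ω_γ}(y_i) = Σ_{γ∈{0,1}} Π_{i∈{1,2}} w_{I,1}(x_i) w_{J×Ω_γ}(y_i). -/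
open MeasureTheory

/-- The `j`-th binary digit of a nonnegative real number `x`. -/
noncomputable def bdigit (x : ℝ) (j : ℤ) : ℕ := (Int.toNat ⌊x / 2 ^ j⌋) % 2

/-- Binary digitwise addition (XOR) of nonnegative reals. -/
noncomputable def dxor (x y : ℝ) : ℝ :=
  ∑' j : ℤ, (((bdigit x j + bdigit y j) % 2 : ℕ) : ℝ) * 2 ^ j

/-- The dyadic interval `[2^{-k} l, 2^{-k} (l+1))`. -/
def dyadicI (k : ℤ) (l : ℕ) : Set ℝ :=
  Set.Ico ((2 : ℝ) ^ (-k) * l) ((2 : ℝ) ^ (-k) * (l + 1))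

/-- The L^∞-normalized Walsh wave packet `w_{I,n}` for `I = [2^{-k} l, 2^{-k}(l+1))`. -/
noncomputable def walsh (k : ℤ) (l n : ℕ) (x : ℝ) : ℝ :=
  Set.indicator (dyadicI k l)
    (fun x => (-1 : ℝ) ^ (∑ j ∈ Finset.range (n + 1),
      (Nat.testBit n j).toNat * bdigit x (-(j : ℤ) - k - 1))) x

/-- The Walsh–Fourier average `[f]_{I,n} = |I|^{-1} ∫_I f w_{I,n}`. -/
noncomputable def avg (k : ℤ) (l n : ℕ) (f : ℝ → ℝ) : ℝ :=
  (2 : ℝ) ^ k * ∫ x in dyadicI k l, f x * walsh k l n x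

/-- A real-valued dyadic step function supported on `[0,1)²`. -/
def IsDyadicStep (F : ℝ → ℝ → ℝ) : Prop :=
  ∃ (s : Finset ((ℤ × ℕ) × (ℤ × ℕ))) (c : (ℤ × ℕ) × (ℤ × ℕ) → ℝ),
    (∀ p ∈ s, dyadicI p.1.1 p.1.2 ⊆ Set.Ico (0 : ℝ) 1 ∧
      dyadicI p.2.1 p.2.2 ⊆ Set.Ico (0 : ℝ) 1) ∧
    ∀ x y : ℝ, F x y = ∑ p ∈ s, c p * Set.indicator (dyadicI p.1.1 p.1.2) 1 x *
      Set.indicator (dyadicI p.2.1 p.2.2) 1 y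

/-- `F` is constant on dyadic squares with sides of length `2^{-M}`. -/
def ConstOnSquares (M : ℕ) (F : ℝ → ℝ → ℝ) : Prop :=
  ∀ l₁ l₂ : ℕ, ∀ x ∈ dyadicI (M : ℤ) l₁, ∀ x' ∈ dyadicI (M : ℤ) l₁,
    ∀ y ∈ dyadicI (M : ℤ) l₂, ∀ y' ∈ dyadicI (M : ℤ) l₂, F x y = F x' y'

lemma bdigit_of_mem (k : ℤ) (m : ℕ) {x : ℝ}
    (h1 : (2:ℝ)^(-k) * m ≤ x) (h2 : x < (2:ℝ)^(-k)*(m+1)) : bdigit x (-k) = m % 2 := by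
  have hpos : (0:ℝ) < (2:ℝ)^k := by positivity
  have hne : (2:ℝ)^(-k) = ((2:ℝ)^k)⁻¹ := by rw [zpow_neg]
  have hdiv : x / (2:ℝ)^(-k) = x * (2:ℝ)^k := by rw [hne]; field_simp
  have hfloor : ⌊x / (2:ℝ)^(-k)⌋ = (m:ℤ) := by
    rw [hdiv, Int.floor_eq_iff]
    constructor
    · have := mul_le_mul_of_nonneg_right h1 hpos.le
      rw [hne] at this
      calc ((m:ℤ):ℝ) = ((2:ℝ)^k)⁻¹ * m * (2:ℝ)^k := by rw [Int.cast_natCast]; field_simp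
        _ ≤ x * (2:ℝ)^k := this
    · have := mul_lt_mul_of_pos_right h2 hpos
      rw [hne] at this
      calc x * (2:ℝ)^k < ((2:ℝ)^k)⁻¹ * (m+1) * (2:ℝ)^k := this
        _ = ((m:ℤ):ℝ) + 1 := by rw [Int.cast_natCast]; field_simp
  unfold bdigit
  rw [hfloor]
  simp

lemma hhalf (k : ℤ) : (2:ℝ)^(-(k+1)) = (2:ℝ)^(-k) / 2 := by
  rw [show -(k+1) = -k + (-1) by ring, zpow_add₀ (by norm_num : (2:ℝ) ≠ 0)]
  norm_num
  ring

lemma exp_eq (k : ℤ) (n γ : ℕ) (hγ : γ < 2) (x : ℝ) :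
    ∑ j ∈ Finset.range (2*n+γ+1), ((2*n+γ).testBit j).toNat * bdigit x (-(j:ℤ)-k-1)
    = γ * bdigit x (-(k+1)) +
      ∑ j ∈ Finset.range (n+1), (n.testBit j).toNat * bdigit x (-(j:ℤ)-(k+1)-1) := by
  rw [Finset.sum_range_succ']
  have h0 : ((2*n+γ).testBit 0).toNat * bdigit x (-((0:ℕ):ℤ)-k-1) = γ * bdigit x (-(k+1)) := by
    have : (-((0:ℕ):ℤ)-k-1) = -(k+1) := by push_cast; ring
    rw [this, Nat.testBit_zero]
    have : (2*n+γ) % 2 = γ := by omega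
    rw [this]
    interval_cases γ <;> simp
  have hsucc : ∀ j, ((2*n+γ).testBit (j+1)).toNat * bdigit x (-((j+1:ℕ):ℤ)-k-1)
      = (n.testBit j).toNat * bdigit x (-(j:ℤ)-(k+1)-1) := by
    intro j
    have e1 : (2*n+γ).testBit (j+1) = n.testBit j := by
      rw [Nat.testBit_succ]
      congr 1
      omega
    have e2 : (-((j+1:ℕ):ℤ)-k-1) = -(j:ℤ)-(k+1)-1 := by push_cast; ring
    rw [e1, e2]
  rw [h0]
  simp only [hsucc]
  rw [add_comm]
  congr 1
  rcases Nat.eq_zero_or_pos (2*n+γ) with h | h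
  · have hn : n = 0 := by omega
    have hg : γ = 0 := by omega
    subst hn hg
    simp
  · refine (Finset.sum_subset (Finset.range_subset_range.2 (by omega)) ?_).symm
    intro j _ hj
    have hjn : n + 1 ≤ j := Nat.le_of_not_lt (by simpa [Finset.mem_range] using hj)
    have : n < 2^j := lt_of_lt_of_le (Nat.lt_two_pow_self (n := n)) (Nat.pow_le_pow_right (by norm_num) (by omega))
    rw [Nat.testBit_lt_two_pow this]
    simp

lemma walsh_split (k : ℤ) (l n γ : ℕ) (hγ : γ < 2) (x : ℝ) :
    walsh k l (2*n+γ) x = walsh (k+1) (2*l) n x + (-1:ℝ)^γ * walsh (k+1) (2*l+1) n x := by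
  have hh := hhalf k
  have hpos : (0:ℝ) < (2:ℝ)^(-k) := by positivity
  -- interval endpoints
  have eL : (2:ℝ)^(-(k+1)) * ((2*l:ℕ):ℝ) = (2:ℝ)^(-k) * l := by push_cast; rw [hh]; ring
  have eM : (2:ℝ)^(-(k+1)) * (((2*l:ℕ):ℝ)+1) = (2:ℝ)^(-k) * l + (2:ℝ)^(-k)/2 := by
    push_cast; rw [hh]; ring
  have eM' : (2:ℝ)^(-(k+1)) * (((2*l+1:ℕ):ℝ)) = (2:ℝ)^(-k) * l + (2:ℝ)^(-k)/2 := by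
    push_cast; rw [hh]; ring
  have eR : (2:ℝ)^(-(k+1)) * (((2*l+1:ℕ):ℝ)+1) = (2:ℝ)^(-k) * (l+1) := by
    push_cast; rw [hh]; ring
  by_cases hxI : x ∈ dyadicI k l
  · obtain ⟨ha, hb⟩ := hxI
    have hmemI : x ∈ dyadicI k l := Set.mem_Ico.2 ⟨ha, hb⟩
    by_cases hxL : x < (2:ℝ)^(-k) * l + (2:ℝ)^(-k)/2
    · -- left half
      have hmemL : x ∈ dyadicI (k+1) (2*l) := Set.mem_Ico.2 ⟨by rw [eL]; exact ha, by rw [eM]; exact hxL⟩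
      have hmemR : x ∉ dyadicI (k+1) (2*l+1) := by
        intro ⟨h1, _⟩; rw [eM'] at h1; linarith
      have hd : bdigit x (-(k+1)) = 0 := by
        have := bdigit_of_mem (k+1) (2*l) (x := x) (by rw [eL]; exact ha) (by rw [eM]; exact hxL)
        omega
      rw [walsh, walsh, walsh, Set.indicator_of_mem hmemI, Set.indicator_of_mem hmemL,
        Set.indicator_of_notMem hmemR]
      rw [exp_eq k n γ hγ x, hd]
      ring
    · -- right half
      push_neg at hxL
      have hmemR : x ∈ dyadicI (k+1) (2*l+1) := Set.mem_Ico.2 ⟨by rw [eM']; exact hxL, by rw [eR]; exact hb⟩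
      have hmemL : x ∉ dyadicI (k+1) (2*l) := by
        intro ⟨_, h2⟩; rw [eM] at h2; linarith
      have hd : bdigit x (-(k+1)) = 1 := by
        have := bdigit_of_mem (k+1) (2*l+1) (x := x) (by rw [eM']; exact hxL) (by rw [eR]; exact hb)
        omega
      rw [walsh, walsh, walsh, Set.indicator_of_mem hmemI, Set.indicator_of_mem hmemR,
        Set.indicator_of_notMem hmemL]
      rw [exp_eq k n γ hγ x, hd]
      rw [pow_add, pow_mul]
      simp
  · have hL : x ∉ dyadicI (k+1) (2*l) := by
      intro ⟨h1, h2⟩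
      exact hxI ⟨by rw [eL] at h1; exact h1, by rw [eM] at h2; nlinarith⟩
    have hR : x ∉ dyadicI (k+1) (2*l+1) := by
      intro ⟨h1, h2⟩
      refine hxI ⟨?_, by rw [eR] at h2; exact h2⟩
      rw [eM'] at h1; nlinarith
    rw [walsh, walsh, walsh, Set.indicator_of_notMem hxI, Set.indicator_of_notMem hL,
      Set.indicator_of_notMem hR]
    ring


theorem multitile_identity_B2 (k : ℤ) (l₁ l₂ n : ℕ) :
    ∀ᵐ p : ℝ × ℝ × ℝ × ℝ ∂(volume : Measure (ℝ × ℝ × ℝ × ℝ)),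
      4 * (∑ α ∈ Finset.range 2, ∑ β ∈ Finset.range 2,
          (walsh (k + 1) (2 * l₁ + α) 0 p.1 * walsh (k + 1) (2 * l₂ + β) n p.2.2.1) *
          (walsh (k + 1) (2 * l₁ + α) 0 p.2.1 * walsh (k + 1) (2 * l₂ + β) n p.2.2.2))
        - (∑ γ ∈ Finset.range 2,
          (walsh k l₁ 0 p.1 * walsh k l₂ (2 * n + γ) p.2.2.1) *
          (walsh k l₁ 0 p.2.1 * walsh k l₂ (2 * n + γ) p.2.2.2))
      = ∑ γ ∈ Finset.range 2,
          (walsh k l₁ 1 p.1 * walsh k l₂ (2 * n + γ) p.2.2.1) *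
          (walsh k l₁ 1 p.2.1 * walsh k l₂ (2 * n + γ) p.2.2.2) := by
  refine Filter.Eventually.of_forall fun p => ?_
  have en0 := fun y => walsh_split k l₂ n 0 (by norm_num) y
  have en1 := fun y => walsh_split k l₂ n 1 (by norm_num) y
  have e0 := fun x => walsh_split k l₁ 0 0 (by norm_num) x
  have e1 := fun x => walsh_split k l₁ 0 1 (by norm_num) x
  simp only [Nat.mul_zero, Nat.add_zero, Nat.zero_add, pow_zero, pow_one, one_mul] at e0 e1 en0 en1
  simp only [Finset.sum_range_succ, Finset.sum_range_zero, Nat.add_zero, zero_add,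
    pow_zero, pow_one, one_mul, e0, e1, en0, en1]
  ring
end

section
/- Define for real-valued dyadic step functions F₁ on [0,1)² and a tile I×J×Ω the quantity B₂(I×J×Ω) := ( |J|^{-1} ∫_J ( |I|^{-1} ∫_I F₁(x,y) dx ) w_{J×Ω}(y) dy )². Then for any multitile P = I×J×Ω (with |I|=|J|=2|Ω|^{-1}), the first-order difference (□B₂)(P) := (1/4)Σ_{α,β∈{0,1}} B₂(I_α×J_β×Ω) − Σ_{γ∈{0,1}} B₂(I×J×Ω_γ) equals Σ_{γ∈{0,1}} ( |J|^{-1} ∫_J ( |I|^{-1} ∫_I F₁(x,y) w_{I,1}(x) dx ) w_{J×Ω_γ}(y) dy )², and in particular (□B₂)(P) ≥ 0. -/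
open MeasureTheory

/-- `B₂` evaluated at the tile `I × J × Ω` with `I = [2^{-k}l₁, ·)`, `J = [2^{-k}l₂, ·)`,
`Ω = [2^k n, 2^k (n+1))`. -/
noncomputable def B2 (F : ℝ → ℝ → ℝ) (k : ℤ) (l₁ l₂ n : ℕ) : ℝ :=
  (avg k l₂ n (fun y => avg k l₁ 0 (fun x => F x y))) ^ 2

/-! ### Auxiliary lemmas -/

lemma measurableSet_dyadicI (k : ℤ) (l : ℕ) : MeasurableSet (dyadicI k l) :=
  measurableSet_Ico

lemma measurable_bdigit (j : ℤ) : Measurable (fun x => bdigit x j) := by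
  unfold bdigit
  exact (measurable_of_countable fun z : ℤ => (Int.toNat z) % 2).comp
    (Int.measurable_floor.comp (measurable_id.div_const _))

lemma measurable_walsh (k : ℤ) (l n : ℕ) : Measurable (walsh k l n) := by
  unfold walsh
  apply Measurable.indicator _ (measurableSet_dyadicI k l)
  have hsum : Measurable fun x => (∑ j ∈ Finset.range (n + 1),
      (Nat.testBit n j).toNat * bdigit x (-(j : ℤ) - k - 1)) := by
    apply Finset.measurable_sum
    intro j _
    exact (measurable_of_countable fun m : ℕ => (Nat.testBit n j).toNat * m).comp
      (measurable_bdigit _)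
  exact (measurable_of_countable fun m : ℕ => ((-1 : ℝ)) ^ m).comp hsum

lemma norm_walsh_le (k : ℤ) (l n : ℕ) (x : ℝ) : ‖walsh k l n x‖ ≤ 1 := by
  unfold walsh
  by_cases h : x ∈ dyadicI k l
  · rw [Set.indicator_of_mem h, Real.norm_eq_abs, abs_pow, abs_neg, abs_one, one_pow]
  · rw [Set.indicator_of_notMem h]; simp

lemma integrable_mul_walsh {g : ℝ → ℝ} (hg : Integrable g) (k : ℤ) (l n : ℕ) :
    Integrable (fun x => g x * walsh k l n x) := by
  have h := hg.bdd_mul (c := 1) (measurable_walsh k l n).aestronglyMeasurable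
    (Filter.Eventually.of_forall (norm_walsh_le k l n))
  have heq : (fun x => g x * walsh k l n x) = fun x => walsh k l n x * g x :=
    funext fun x => mul_comm _ _
  rw [heq]; exact h

lemma dyadicI_split (k : ℤ) (l : ℕ) :
    dyadicI k l = dyadicI (k + 1) (2 * l) ∪ dyadicI (k + 1) (2 * l + 1) := by
  have hc : (2 : ℝ) ^ (-k) = 2 ^ (-(k + 1)) * 2 := by
    rw [show -k = -(k + 1) + 1 by ring, zpow_add_one₀ (by norm_num : (2 : ℝ) ≠ 0)]
  have hcpos : (0 : ℝ) < 2 ^ (-(k + 1)) := by positivity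
  unfold dyadicI
  push_cast
  have h1 : (2 : ℝ) ^ (-(k + 1)) * (2 * (l : ℝ)) ≤ 2 ^ (-(k + 1)) * (2 * (l : ℝ) + 1) := by
    nlinarith
  have h2 : (2 : ℝ) ^ (-(k + 1)) * (2 * (l : ℝ) + 1) ≤ 2 ^ (-(k + 1)) * (2 * (l : ℝ) + 1 + 1) := by
    nlinarith
  rw [Set.Ico_union_Ico_eq_Ico h1 h2]
  congr 1 <;> (rw [hc]; ring)

lemma floor_of_mem {k : ℤ} {l : ℕ} {x : ℝ} (hx : x ∈ dyadicI k l) :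
    ⌊x / 2 ^ (-k)⌋ = (l : ℤ) := by
  obtain ⟨h1, h2⟩ := hx
  have hc : (0 : ℝ) < (2 : ℝ) ^ (-k) := by positivity
  rw [Int.floor_eq_iff]
  constructor
  · rw [le_div_iff₀ hc]; push_cast; linarith
  · rw [div_lt_iff₀ hc]; push_cast; linarith

lemma bitsum_ext (m : ℕ) (f : ℕ → ℕ) (N : ℕ) (hN : m < 2 ^ N) :
    ∑ j ∈ Finset.range N, (Nat.testBit m j).toNat * f j
      = ∑ j ∈ Finset.range (m + 1), (Nat.testBit m j).toNat * f j := by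
  have key : ∀ L₁ L₂ : ℕ, L₁ ≤ L₂ → m < 2 ^ L₁ →
      ∑ j ∈ Finset.range L₁, (Nat.testBit m j).toNat * f j
        = ∑ j ∈ Finset.range L₂, (Nat.testBit m j).toNat * f j := by
    intro L₁ L₂ h hm
    apply Finset.sum_subset (Finset.range_subset_range.2 h)
    intro j _ hj
    rw [Finset.mem_range, not_lt] at hj
    have : m < 2 ^ j :=
      lt_of_lt_of_le hm (Nat.pow_le_pow_right (by norm_num) hj)
    rw [Nat.testBit_lt_two_pow this]
    simp
  have h1 := key N (max N (m + 1)) (le_max_left _ _) hN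
  have h2 := key (m + 1) (max N (m + 1)) (le_max_right _ _)
    (lt_of_lt_of_le ((Nat.lt_two_pow_self (n := m))) (Nat.pow_le_pow_right (by norm_num) (Nat.le_succ m)))
  rw [h1, ← h2]

lemma walsh_rec (k : ℤ) (l m ε β : ℕ) (hε : ε < 2) (hβ : β < 2) (x : ℝ)
    (hx : x ∈ dyadicI (k + 1) (2 * l + β)) :
    walsh k l (2 * m + ε) x = (-1 : ℝ) ^ (ε * β) * walsh (k + 1) (2 * l + β) m x := by
  have hxI : x ∈ dyadicI k l := by
    rw [dyadicI_split k l]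
    interval_cases β
    · exact Set.mem_union_left _ (by simpa using hx)
    · exact Set.mem_union_right _ hx
  have hfloor : ⌊x / 2 ^ (-(k + 1))⌋ = ((2 * l + β : ℕ) : ℤ) := floor_of_mem hx
  have hd0 : bdigit x (-((0 : ℕ) : ℤ) - k - 1) = β := by
    unfold bdigit
    rw [show (-((0 : ℕ) : ℤ) - k - 1) = -(k + 1) by push_cast; ring, hfloor]
    simp only [Int.toNat_natCast]
    omega
  have hdshift : ∀ j : ℕ, bdigit x (-((j + 1 : ℕ) : ℤ) - k - 1) = bdigit x (-(j : ℤ) - (k + 1) - 1) := by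
    intro j; congr 1; push_cast; ring
  have hbs : ∀ j : ℕ, Nat.testBit (2 * m + ε) (j + 1) = Nat.testBit m j := by
    intro j
    rw [Nat.testBit_succ]
    congr 1
    omega
  have hb0 : (Nat.testBit (2 * m + ε) 0).toNat * bdigit x (-((0 : ℕ) : ℤ) - k - 1) = ε * β := by
    rw [hd0, Nat.testBit_zero]
    have h2 : (2 * m + ε) % 2 = ε := by omega
    rw [h2]
    interval_cases ε <;> simp
  have hm : m < 2 ^ (2 * m + ε) :=
    lt_of_lt_of_le ((Nat.lt_two_pow_self (n := m))) (Nat.pow_le_pow_right (by norm_num) (by omega))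
  have hexp : ∑ j ∈ Finset.range (2 * m + ε + 1),
        (Nat.testBit (2 * m + ε) j).toNat * bdigit x (-(j : ℤ) - k - 1)
      = ε * β + ∑ j ∈ Finset.range (m + 1),
        (Nat.testBit m j).toNat * bdigit x (-(j : ℤ) - (k + 1) - 1) := by
    rw [Finset.sum_range_succ']
    have hstep : ∀ j ∈ Finset.range (2 * m + ε),
        (Nat.testBit (2 * m + ε) (j + 1)).toNat * bdigit x (-((j + 1 : ℕ) : ℤ) - k - 1)
          = (Nat.testBit m j).toNat * bdigit x (-(j : ℤ) - (k + 1) - 1) := by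
      intro j _
      rw [hbs j, hdshift j]
    rw [Finset.sum_congr rfl hstep, bitsum_ext m _ (2 * m + ε) hm, hb0]
    omega
  unfold walsh
  rw [Set.indicator_of_mem hxI, Set.indicator_of_mem hx, ← pow_add, hexp]

lemma avg_split (k : ℤ) (l m ε : ℕ) (hε : ε < 2) (g : ℝ → ℝ) (hg : Integrable g) :
    avg k l (2 * m + ε) g
      = (avg (k + 1) (2 * l) m g + (-1 : ℝ) ^ ε * avg (k + 1) (2 * l + 1) m g) / 2 := by
  have hw := integrable_mul_walsh hg k l (2 * m + ε)
  have hdisj : Disjoint (dyadicI (k + 1) (2 * l)) (dyadicI (k + 1) (2 * l + 1)) := by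
    simp only [dyadicI, Set.disjoint_left, Set.mem_Ico]
    rintro x ⟨_, h2⟩ ⟨h3, _⟩
    push_cast at h2 h3
    linarith
  unfold avg
  rw [dyadicI_split k l,
    setIntegral_union hdisj (measurableSet_dyadicI _ _) hw.integrableOn hw.integrableOn]
  have h0 : ∫ x in dyadicI (k + 1) (2 * l), g x * walsh k l (2 * m + ε) x
      = ∫ x in dyadicI (k + 1) (2 * l), g x * walsh (k + 1) (2 * l) m x := by
    apply setIntegral_congr_fun (measurableSet_dyadicI _ _)
    intro x hx
    show g x * walsh k l (2 * m + ε) x = g x * walsh (k + 1) (2 * l) m x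
    rw [walsh_rec k l m ε 0 hε (by norm_num) x (by simpa using hx)]
    simp
  have h1 : ∫ x in dyadicI (k + 1) (2 * l + 1), g x * walsh k l (2 * m + ε) x
      = (-1 : ℝ) ^ ε * ∫ x in dyadicI (k + 1) (2 * l + 1), g x * walsh (k + 1) (2 * l + 1) m x := by
    rw [← integral_const_mul]
    apply setIntegral_congr_fun (measurableSet_dyadicI _ _)
    intro x hx
    show g x * walsh k l (2 * m + ε) x = (-1 : ℝ) ^ ε * (g x * walsh (k + 1) (2 * l + 1) m x)
    rw [walsh_rec k l m ε 1 hε (by norm_num) x hx]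
    ring
  rw [h0, h1]
  have h2 : (2 : ℝ) ^ (k + 1) = 2 ^ k * 2 := zpow_add_one₀ (by norm_num) k
  rw [h2]
  ring

lemma avg_const_mul (k : ℤ) (l n : ℕ) (c : ℝ) (f : ℝ → ℝ) :
    avg k l n (fun x => c * f x) = c * avg k l n f := by
  unfold avg
  rw [show (fun x => (c * f x) * walsh k l n x) = fun x => c * (f x * walsh k l n x) from
    funext fun x => by ring, integral_const_mul]
  ring

lemma avg_add (k : ℤ) (l n : ℕ) (f g : ℝ → ℝ) (hf : Integrable f) (hg : Integrable g) :
    avg k l n (fun x => f x + g x) = avg k l n f + avg k l n g := by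
  unfold avg
  rw [show (fun x => (f x + g x) * walsh k l n x)
      = fun x => f x * walsh k l n x + g x * walsh k l n x from funext fun x => by ring,
    integral_add (integrable_mul_walsh hf k l n).integrableOn
      (integrable_mul_walsh hg k l n).integrableOn]
  ring

lemma avg_comb (k : ℤ) (l n : ℕ) (t s : ℝ) (f g h : ℝ → ℝ) (hf : Integrable f)
    (hg : Integrable g) (hfg : ∀ y, h y = t * f y + s * g y) :
    avg k l n h = t * avg k l n f + s * avg k l n g := by
  have h1 : h = fun y => t * f y + s * g y := funext hfg
  rw [h1, avg_add k l n _ _ (hf.const_mul t) (hg.const_mul s), avg_const_mul, avg_const_mul]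

lemma avg_sum {ι : Type*} (k : ℤ) (l n : ℕ) (s : Finset ι) (f : ι → ℝ → ℝ)
    (hf : ∀ i ∈ s, Integrable (f i)) :
    avg k l n (fun x => ∑ i ∈ s, f i x) = ∑ i ∈ s, avg k l n (f i) := by
  unfold avg
  rw [show (fun x => (∑ i ∈ s, f i x) * walsh k l n x)
      = fun x => ∑ i ∈ s, (f i x * walsh k l n x) from funext fun x => by rw [Finset.sum_mul],
    integral_finset_sum s (fun i hi => (integrable_mul_walsh (hf i hi) k l n).integrableOn),
    Finset.mul_sum]

lemma integrable_indicator_one (k : ℤ) (l : ℕ) :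
    Integrable (Set.indicator (dyadicI k l) (1 : ℝ → ℝ)) := by
  rw [integrable_indicator_iff (measurableSet_dyadicI k l)]
  have : IntegrableOn (fun _ : ℝ => (1 : ℝ)) (dyadicI k l) volume :=
    integrableOn_const measure_Ico_lt_top.ne
  exact this

theorem box_B2 (F₁ : ℝ → ℝ → ℝ) (hF₁ : IsDyadicStep F₁) (k : ℤ) (l₁ l₂ n : ℕ) :
    (1 / 4) * (∑ α ∈ Finset.range 2, ∑ β ∈ Finset.range 2,
        B2 F₁ (k + 1) (2 * l₁ + α) (2 * l₂ + β) n)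
      - (∑ γ ∈ Finset.range 2, B2 F₁ k l₁ l₂ (2 * n + γ))
    = (∑ γ ∈ Finset.range 2,
        (avg k l₂ (2 * n + γ) (fun y => avg k l₁ 1 (fun x => F₁ x y))) ^ 2) ∧
    0 ≤ (1 / 4) * (∑ α ∈ Finset.range 2, ∑ β ∈ Finset.range 2,
        B2 F₁ (k + 1) (2 * l₁ + α) (2 * l₂ + β) n)
      - (∑ γ ∈ Finset.range 2, B2 F₁ k l₁ l₂ (2 * n + γ)) := by
  obtain ⟨s, c, -, hrep⟩ := hF₁
  have hFy : ∀ y : ℝ, Integrable (fun x => F₁ x y) := by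
    intro y
    rw [show (fun x => F₁ x y) = fun x => ∑ p ∈ s,
        (c p * Set.indicator (dyadicI p.2.1 p.2.2) 1 y) * Set.indicator (dyadicI p.1.1 p.1.2) 1 x
      from funext fun x => by
        rw [hrep x y]; exact Finset.sum_congr rfl fun p _ => by ring]
    exact integrable_finset_sum s fun p _ => (integrable_indicator_one _ _).const_mul _
  have hiy : ∀ (k' : ℤ) (l' n₁ : ℕ), Integrable (fun y => avg k' l' n₁ (fun x => F₁ x y)) := by
    intro k' l' n₁
    have hrepy : (fun y => avg k' l' n₁ (fun x => F₁ x y))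
        = fun y => ∑ p ∈ s, Set.indicator (dyadicI p.2.1 p.2.2)
            (fun _ => c p * avg k' l' n₁ (Set.indicator (dyadicI p.1.1 p.1.2) 1)) y := by
      funext y
      have h1 : (fun x => F₁ x y) = fun x => ∑ p ∈ s,
          (c p * Set.indicator (dyadicI p.2.1 p.2.2) 1 y) * Set.indicator (dyadicI p.1.1 p.1.2) 1 x :=
        funext fun x => by
          rw [hrep x y]; exact Finset.sum_congr rfl fun p _ => by ring
      rw [h1, avg_sum k' l' n₁ s
        (fun p => fun x => (c p * Set.indicator (dyadicI p.2.1 p.2.2) 1 y)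
          * Set.indicator (dyadicI p.1.1 p.1.2) 1 x)
        (fun p _ => (integrable_indicator_one _ _).const_mul _)]
      apply Finset.sum_congr rfl
      intro p _
      rw [avg_const_mul]
      by_cases hy : y ∈ dyadicI p.2.1 p.2.2
      · simp only [Set.indicator_of_mem hy, Pi.one_apply]
        ring
      · simp [Set.indicator_of_notMem hy]
    rw [hrepy]
    apply integrable_finset_sum
    intro p _
    rw [integrable_indicator_iff (measurableSet_dyadicI _ _)]
    exact integrableOn_const measure_Ico_lt_top.ne
  -- inner splits (pointwise in y)
  have hE : ∀ y : ℝ, avg k l₁ 0 (fun x => F₁ x y)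
      = (1 / 2) * avg (k + 1) (2 * l₁) 0 (fun x => F₁ x y)
        + (1 / 2) * avg (k + 1) (2 * l₁ + 1) 0 (fun x => F₁ x y) := by
    intro y
    have h := avg_split k l₁ 0 0 (by norm_num) (fun x => F₁ x y) (hFy y)
    norm_num at h
    rw [h]; ring
  have hD : ∀ y : ℝ, avg k l₁ 1 (fun x => F₁ x y)
      = (1 / 2) * avg (k + 1) (2 * l₁) 0 (fun x => F₁ x y)
        + (-(1 / 2)) * avg (k + 1) (2 * l₁ + 1) 0 (fun x => F₁ x y) := by
    intro y
    have h := avg_split k l₁ 0 1 (by norm_num) (fun x => F₁ x y) (hFy y)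
    norm_num at h
    rw [h]; ring
  -- middle-level linearity
  have hEb : ∀ (l' n' : ℕ), avg (k + 1) l' n' (fun y => avg k l₁ 0 (fun x => F₁ x y))
      = (1 / 2) * avg (k + 1) l' n' (fun y => avg (k + 1) (2 * l₁) 0 (fun x => F₁ x y))
        + (1 / 2) * avg (k + 1) l' n' (fun y => avg (k + 1) (2 * l₁ + 1) 0 (fun x => F₁ x y)) :=
    fun l' n' => avg_comb (k + 1) l' n' (1 / 2) (1 / 2) _ _ _
      (hiy (k + 1) (2 * l₁) 0) (hiy (k + 1) (2 * l₁ + 1) 0) hE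
  have hDb : ∀ (l' n' : ℕ), avg (k + 1) l' n' (fun y => avg k l₁ 1 (fun x => F₁ x y))
      = (1 / 2) * avg (k + 1) l' n' (fun y => avg (k + 1) (2 * l₁) 0 (fun x => F₁ x y))
        + (-(1 / 2)) * avg (k + 1) l' n' (fun y => avg (k + 1) (2 * l₁ + 1) 0 (fun x => F₁ x y)) :=
    fun l' n' => avg_comb (k + 1) l' n' (1 / 2) (-(1 / 2)) _ _ _
      (hiy (k + 1) (2 * l₁) 0) (hiy (k + 1) (2 * l₁ + 1) 0) hD
  -- outer splits
  have hO : ∀ (n₁ γ : ℕ), γ < 2 →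
      avg k l₂ (2 * n + γ) (fun y => avg k l₁ n₁ (fun x => F₁ x y))
        = (avg (k + 1) (2 * l₂) n (fun y => avg k l₁ n₁ (fun x => F₁ x y))
            + (-1 : ℝ) ^ γ * avg (k + 1) (2 * l₂ + 1) n (fun y => avg k l₁ n₁ (fun x => F₁ x y))) / 2 :=
    fun n₁ γ hγ => avg_split k l₂ n γ hγ _ (hiy k l₁ n₁)
  have h00 := hO 0 0 (by norm_num)
  have h01 := hO 0 1 (by norm_num)
  have h10 := hO 1 0 (by norm_num)
  have h11 := hO 1 1 (by norm_num)
  norm_num at h00 h01 h10 h11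
  have key : (1 / 4) * (∑ α ∈ Finset.range 2, ∑ β ∈ Finset.range 2,
        B2 F₁ (k + 1) (2 * l₁ + α) (2 * l₂ + β) n)
      - (∑ γ ∈ Finset.range 2, B2 F₁ k l₁ l₂ (2 * n + γ))
    = (∑ γ ∈ Finset.range 2,
        (avg k l₂ (2 * n + γ) (fun y => avg k l₁ 1 (fun x => F₁ x y))) ^ 2) := by
    simp only [Finset.sum_range_succ, Finset.sum_range_zero, zero_add, add_zero, B2]
    rw [h00, h01, h10, h11, hEb (2 * l₂) n, hEb (2 * l₂ + 1) n,
      hDb (2 * l₂) n, hDb (2 * l₂ + 1) n]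
    ring
  refine ⟨key, ?_⟩
  rw [key]
  apply Finset.sum_nonneg
  intro γ _
  positivity
end
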